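/- Let q be a prime, let m, n be positive integers, and let f be a polynomial in m variables over ℤ/qℤ (an element of MvPolynomial (Fin m) (ZMod q)) that is not the zero polynomial and has total degree at most n. Then the number of points x : Fin m → ℤ/qℤ with f(x) = 0 is at most n · q^{m−1}. Equivalently, if C_1, …, C_m are chosen independently and uniformly at random from ℤ/qℤ, then the probability that f(C_1, …, C_m) ≡ 0 (mod q) is at most n/q. -/

import Mathlib

open Finset MvPolynomial

lemma SZ_aux (q : ℕ) [Fact q.Prime] :
    ∀ (m : ℕ) (f : MvPolynomial (Fin m) (ZMod q)), f ≠ 0 →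
    (Finset.univ.filter fun x : Fin m → ZMod q => MvPolynomial.eval x f = 0).card * q
      ≤ f.totalDegree * q ^ m := by
  intro m
  induction m with
  | zero =>
    intro f hf
    have : (Finset.univ.filter fun x : Fin 0 → ZMod q => MvPolynomial.eval x f = 0) = ∅ := by
      rw [Finset.filter_eq_empty_iff]
      intro x _
      have hfc : f = C (f.coeff 0) := (f.eq_C_of_isEmpty)
      rw [hfc, eval_C]
      intro h
      apply hf
      rw [hfc, h, map_zero]
    rw [this, Finset.card_empty, Nat.zero_mul]
    exact Nat.zero_le _
  | succ m ih =>
    intro f hf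
    set p := finSuccEquiv (ZMod q) m f with hp
    have hp0 : p ≠ 0 := by
      simp [hp, EmbeddingLike.map_ne_zero_iff, hf]
    set d := p.natDegree with hd
    set g := p.leadingCoeff with hg
    have hg0 : g ≠ 0 := Polynomial.leadingCoeff_ne_zero.mpr hp0
    have hdeg : g.totalDegree + d ≤ f.totalDegree :=
      totalDegree_coeff_finSuccEquiv_add_le f d hg0
    -- per-fiber bound
    have fiber : ∀ s : Fin m → ZMod q,
        (Finset.univ.filter fun a : ZMod q => MvPolynomial.eval (Fin.cons a s) f = 0).card
          ≤ if MvPolynomial.eval s g = 0 then q else d := by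
      intro s
      split_ifs with hs
      · calc _ ≤ (Finset.univ : Finset (ZMod q)).card := Finset.card_filter_le _ _
          _ = q := by simp [ZMod.card]
      · set P : Polynomial (ZMod q) := p.map (MvPolynomial.eval s) with hP
        have hP0 : P ≠ 0 := fun h => hs (by
          have := congrArg (fun r => r.coeff d) h
          exact (by simpa [hP, Polynomial.coeff_map] using this : MvPolynomial.eval s (p.coeff d) = 0))
        have hsub : (Finset.univ.filter fun a : ZMod q =>
            MvPolynomial.eval (Fin.cons a s) f = 0) ⊆ P.roots.toFinset := by
          intro a ha
          simp only [Finset.mem_filter, Finset.mem_univ, true_and] at ha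
          rw [eval_eq_eval_mv_eval'] at ha
          rw [← hp] at ha
          exact Multiset.mem_toFinset.mpr ((Polynomial.mem_roots hP0).mpr ha)
        calc _ ≤ P.roots.toFinset.card := Finset.card_le_card hsub
          _ ≤ Multiset.card P.roots := P.roots.toFinset_card_le
          _ ≤ P.natDegree := P.card_roots'
          _ ≤ d := Polynomial.natDegree_map_le
    -- decompose the count fiberwise over the tail
    have key : (Finset.univ.filter fun x : Fin (m+1) → ZMod q =>
        MvPolynomial.eval x f = 0).card =
        ∑ s : Fin m → ZMod q, ((Finset.univ.filter fun x : Fin (m+1) → ZMod q =>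
          MvPolynomial.eval x f = 0).filter fun x => Fin.tail x = s).card :=
      Finset.card_eq_sum_card_fiberwise (fun x _ => Finset.mem_univ _)
    have fib2 : ∀ s : Fin m → ZMod q,
        ((Finset.univ.filter fun x : Fin (m+1) → ZMod q =>
          MvPolynomial.eval x f = 0).filter fun x => Fin.tail x = s).card
          ≤ (Finset.univ.filter fun a : ZMod q =>
              MvPolynomial.eval (Fin.cons a s) f = 0).card := by
      intro s
      apply Finset.card_le_card_of_injOn (fun x => x 0)
      · intro x hx
        simp only [Finset.mem_coe, Finset.mem_filter, Finset.mem_univ, true_and] at hx ⊢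
        obtain ⟨h1, h2⟩ := hx
        rw [← h2]
        rwa [Fin.cons_self_tail] 
      · intro x hx y hy hxy
        simp only [Finset.coe_filter, Set.mem_setOf_eq] at hx hy
        have := hx.2.trans hy.2.symm
        funext i
        cases i using Fin.cases with
        | zero => exact hxy
        | succ i => exact congrFun this i
    -- count the bad tails
    have hbad := ih g hg0
    -- put it together
    have main : (Finset.univ.filter fun x : Fin (m+1) → ZMod q =>
        MvPolynomial.eval x f = 0).card ≤ g.totalDegree * q ^ m + d * q ^ m := by
      rw [key]
      calc ∑ s : Fin m → ZMod q, _ ≤ ∑ s : Fin m → ZMod q,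
            (if MvPolynomial.eval s g = 0 then q else d) :=
            Finset.sum_le_sum fun s _ => (fib2 s).trans (fiber s)
        _ ≤ ∑ s : Fin m → ZMod q,
            ((if MvPolynomial.eval s g = 0 then q else 0) + d) := by
            apply Finset.sum_le_sum
            intro s _
            split_ifs <;> omega
        _ = (Finset.univ.filter fun s : Fin m → ZMod q =>
              MvPolynomial.eval s g = 0).card * q + (Fintype.card (Fin m → ZMod q)) * d := by
            rw [Finset.sum_add_distrib, ← Finset.sum_filter, Finset.sum_const,
              Finset.sum_const, smul_eq_mul, smul_eq_mul, Finset.card_univ]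
        _ ≤ g.totalDegree * q ^ m + d * q ^ m := by
            have : Fintype.card (Fin m → ZMod q) = q ^ m := by
              simp [ZMod.card]
            rw [this]
            exact add_le_add hbad (le_of_eq (mul_comm _ _))
    calc _ ≤ (g.totalDegree * q ^ m + d * q ^ m) * q := Nat.mul_le_mul_right _ main
      _ = (g.totalDegree + d) * q ^ (m + 1) := by ring
      _ ≤ f.totalDegree * q ^ (m + 1) := Nat.mul_le_mul_right _ hdeg

/-- Let `q` be a prime and `f` a nonzero polynomial in `m` variables over
`ℤ/qℤ` of total degree at most `n`. Then the number of points `x : Fin m → ℤ/qℤ` with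
`f(x) = 0` is at most `n · q^{m−1}` (so a uniformly random point is a zero of `f` with
probability at most `n/q`). -/
theorem card_zero_set_le (q : ℕ) (hq : q.Prime) (m n : ℕ) (hm : 1 ≤ m) (hn : 1 ≤ n)
    (f : MvPolynomial (Fin m) (ZMod q)) (hf : f ≠ 0) (hdeg : f.totalDegree ≤ n) :
    Set.ncard {x : Fin m → ZMod q | MvPolynomial.eval x f = 0} ≤ n * q ^ (m - 1) := by
  haveI := Fact.mk hq
  have hset : {x : Fin m → ZMod q | MvPolynomial.eval x f = 0} =
      ↑(Finset.univ.filter fun x : Fin m → ZMod q => MvPolynomial.eval x f = 0) := by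
    ext x; simp
  rw [hset, Set.ncard_coe_finset]
  have h := SZ_aux q m f hf
  have hq0 : 0 < q := hq.pos
  apply Nat.le_of_mul_le_mul_right _ hq0
  calc _ ≤ f.totalDegree * q ^ m := h
    _ ≤ n * q ^ m := Nat.mul_le_mul_right _ hdeg
    _ = n * q ^ (m - 1) * q := by
        rw [mul_assoc, ← pow_succ]
        congr 2
        omega
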